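/- Fix an integer s ≥ 1 and a function c : ℝ → ℝ. Let β : ℤ × ℝ → ℝ be positive and differentiable in t, satisfying the linear equation ∂_t β(n) = (−1)^s β(n + s) − c(t) β(n) for all n ∈ ℤ. Then v(n) = β(n+1)/β(n) satisfies the s-th flow of the second differential-difference Burgers hierarchy: ∂_t ln v(n) = (−1)^s [ ∏_{j=0}^{s−1} v(n + 1 + j) − ∏_{j=0}^{s−1} v(n + j) ] for all n ∈ ℤ. -/

import Mathlib

lemma telescope_prod (β : ℤ → ℝ → ℝ) (hβ : ∀ n t, 0 < β n t) (t : ℝ) :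
    ∀ (s : ℕ) (n : ℤ),
      ∏ j ∈ Finset.range s, β (n + (j : ℤ) + 1) t / β (n + (j : ℤ)) t
        = β (n + (s : ℤ)) t / β n t := by
  intro s
  induction s with
  | zero => intro n; simp [div_self (hβ n t).ne']
  | succ k ih =>
      intro n
      rw [Finset.prod_range_succ, ih]
      push_cast
      rw [div_mul_div_comm]
      rw [show n + ((k : ℤ) + 1) = n + (k : ℤ) + 1 by ring]
      rw [div_eq_div_iff (ne_of_gt (mul_pos (hβ _ t) (hβ _ t))) (ne_of_gt (hβ _ t))]
      ring

/-- The discrete Cole-Hopf transformation `v(n) = β(n+1)/β(n)` linearizes the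
second differential-difference Burgers hierarchy. -/
theorem cole_hopf_burgers_two
    (s : ℕ) (hs : 1 ≤ s) (c : ℝ → ℝ) (β : ℤ → ℝ → ℝ)
    (hβ : ∀ n t, 0 < β n t)
    (hlin : ∀ n t, HasDerivAt (β n)
      ((-1 : ℝ) ^ s * β (n + (s : ℤ)) t - c t * β n t) t) :
    let v : ℤ → ℝ → ℝ := fun n t => β (n + 1) t / β n t
    ∀ n t, HasDerivAt (fun y => Real.log (v n y))
      ((-1 : ℝ) ^ s * (∏ j ∈ Finset.range s, v (n + 1 + (j : ℤ)) t
        - ∏ j ∈ Finset.range s, v (n + (j : ℤ)) t)) t := by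
  intro v n t
  have h1 := ((hlin (n + 1) t).log (hβ (n + 1) t).ne').sub
    ((hlin n t).log (hβ n t).ne')
  have hfun : (fun y => Real.log (v n y))
      = fun y => Real.log (β (n + 1) y) - Real.log (β n y) := by
    funext y
    exact Real.log_div (hβ (n + 1) y).ne' (hβ n y).ne'
  rw [hfun]
  convert h1 using 1
  · rfl
  · rfl
  · rfl
  have hp1 : ∏ j ∈ Finset.range s, v (n + 1 + (j : ℤ)) t
      = β (n + 1 + (s : ℤ)) t / β (n + 1) t := by
    have := telescope_prod β hβ t s (n + 1)
    simpa [v] using this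
  have hp0 : ∏ j ∈ Finset.range s, v (n + (j : ℤ)) t
      = β (n + (s : ℤ)) t / β n t := by
    have := telescope_prod β hβ t s n
    simpa [v] using this
  rw [hp1, hp0]
  rw [show n + 1 + (s : ℤ) = n + (s : ℤ) + 1 by ring] at *
  have hne1 : β (n + 1) t ≠ 0 := (hβ (n + 1) t).ne'
  have hne0 : β n t ≠ 0 := (hβ n t).ne'
  field_simp
  ring
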